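/- For every integer n ≥ 3 and every integer k ≥ 1, (k(k+2n-2)+1)/(4(k+n-2)²) ≤ (K(K+2n-2)+1)/(4(K+n-2)²) where K = n²-3n+1, with equality if and only if k = K. -/

import Mathlib

theorem ratio_le_max (n : ℕ) (hn : 3 ≤ n) (k : ℕ) (hk : 1 ≤ k) :
    (((k : ℝ) * ((k : ℝ) + 2 * n - 2) + 1) / (4 * ((k : ℝ) + n - 2) ^ 2) ≤
        (((n ^ 2 - 3 * n + 1 : ℕ) : ℝ) * (((n ^ 2 - 3 * n + 1 : ℕ) : ℝ) + 2 * n - 2) + 1) /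
          (4 * (((n ^ 2 - 3 * n + 1 : ℕ) : ℝ) + n - 2) ^ 2)) ∧
    (((k : ℝ) * ((k : ℝ) + 2 * n - 2) + 1) / (4 * ((k : ℝ) + n - 2) ^ 2) =
        (((n ^ 2 - 3 * n + 1 : ℕ) : ℝ) * (((n ^ 2 - 3 * n + 1 : ℕ) : ℝ) + 2 * n - 2) + 1) /
          (4 * (((n ^ 2 - 3 * n + 1 : ℕ) : ℝ) + n - 2) ^ 2) ↔
      k = n ^ 2 - 3 * n + 1) := by
  have hn' : (3 : ℝ) ≤ (n : ℝ) := by exact_mod_cast hn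
  have hk' : (1 : ℝ) ≤ (k : ℝ) := by exact_mod_cast hk
  have h3n : 3 * n ≤ n ^ 2 := by nlinarith
  have hcast : ((n ^ 2 - 3 * n + 1 : ℕ) : ℝ) = (n : ℝ) ^ 2 - 3 * n + 1 := by
    push_cast [Nat.cast_sub h3n]
    ring
  have hx : (0 : ℝ) < (k : ℝ) + n - 2 := by linarith
  have hc : (0 : ℝ) < (n : ℝ) ^ 2 - 2 * n - 1 := by nlinarith
  have hx0 : (0 : ℝ) < ((n : ℝ) ^ 2 - 3 * n + 1) + n - 2 := by nlinarith
  have key :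
      (((n : ℝ) ^ 2 - 3 * n + 1) * (((n : ℝ) ^ 2 - 3 * n + 1) + 2 * n - 2) + 1) /
          (4 * (((n : ℝ) ^ 2 - 3 * n + 1) + n - 2) ^ 2) -
        ((k : ℝ) * ((k : ℝ) + 2 * n - 2) + 1) / (4 * ((k : ℝ) + n - 2) ^ 2) =
        ((k : ℝ) - ((n : ℝ) ^ 2 - 3 * n + 1)) ^ 2 /
          (4 * ((n : ℝ) ^ 2 - 2 * n - 1) * ((k : ℝ) + n - 2) ^ 2) := by
    have h1 : ((k : ℝ) + n - 2) ≠ 0 := ne_of_gt hx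
    have h2 : (((n : ℝ) ^ 2 - 3 * n + 1) + n - 2) ≠ 0 := ne_of_gt hx0
    have h3 : ((n : ℝ) ^ 2 - 2 * n - 1) ≠ 0 := ne_of_gt hc
    rw [div_sub_div _ _ (mul_ne_zero four_ne_zero (pow_ne_zero _ h2)) (mul_ne_zero four_ne_zero (pow_ne_zero _ h1)),
      div_eq_div_iff (mul_ne_zero (mul_ne_zero four_ne_zero (pow_ne_zero _ h2)) (mul_ne_zero four_ne_zero (pow_ne_zero _ h1)))
        (mul_ne_zero (mul_ne_zero four_ne_zero h3) (pow_ne_zero _ h1))]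
    ring
  rw [hcast]
  have hden : (0 : ℝ) < 4 * ((n : ℝ) ^ 2 - 2 * n - 1) * ((k : ℝ) + n - 2) ^ 2 := by
    positivity
  constructor
  · nlinarith [sq_nonneg ((k : ℝ) - ((n : ℝ) ^ 2 - 3 * n + 1)),
      div_nonneg (sq_nonneg ((k : ℝ) - ((n : ℝ) ^ 2 - 3 * n + 1))) hden.le]
  · constructor
    · intro h
      have h0 : ((k : ℝ) - ((n : ℝ) ^ 2 - 3 * n + 1)) ^ 2 /
          (4 * ((n : ℝ) ^ 2 - 2 * n - 1) * ((k : ℝ) + n - 2) ^ 2) = 0 := by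
        rw [← key, h]; ring
      have hkr : (k : ℝ) = (n : ℝ) ^ 2 - 3 * n + 1 := by
        have h0' := (div_eq_zero_iff.mp h0).resolve_right hden.ne'
        have := (pow_eq_zero_iff two_ne_zero).mp h0'
        linarith
      have : (k : ℝ) = ((n ^ 2 - 3 * n + 1 : ℕ) : ℝ) := by rw [hcast, hkr]
      exact_mod_cast this
    · intro h
      have : (k : ℝ) = (n : ℝ) ^ 2 - 3 * n + 1 := by
        rw [← hcast]; exact_mod_cast congrArg (Nat.cast : ℕ → ℝ) h
      rw [this]
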